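/- Under the setup of the unconstrained IPO problem (δ > 0; x⁽ⁱ⁾ ∈ ℝ^{d_x}; y⁽ⁱ⁾ ∈ ℝ^{d_z}; P ∈ ℝ^{d_z×d_x} of full column rank; symmetric positive definite V̂⁽ⁱ⁾, V⁽ⁱ⁾; some x⁽ⁱ⁾ with all coordinates nonzero), define z*(θ, i) = (1/δ)(V̂⁽ⁱ⁾)⁻¹ P diag(x⁽ⁱ⁾) θ and z_ep(i) = (1/δ)(V⁽ⁱ⁾)⁻¹ y⁽ⁱ⁾ (the ex-post optimal portfolio). Then θ* = H⁻¹ d is the unique global minimizer over θ ∈ ℝ^{d_x} of the average tracking error L_te(θ) = (1/(2m)) Σ_{i=1}^m (z*(θ,i) − z_ep(i))ᵀ V⁽ⁱ⁾ (z*(θ,i) − z_ep(i)). -/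

import Mathlib

open Matrix MeasureTheory ProbabilityTheory

/-- The IPO Hessian `H = (1/(mδ)) Σᵢ diag(x⁽ⁱ⁾) Pᵀ (V̂⁽ⁱ⁾)⁻¹ V⁽ⁱ⁾ (V̂⁽ⁱ⁾)⁻¹ P diag(x⁽ⁱ⁾)`. -/
noncomputable def ipoH {m dx dz : ℕ} (δ : ℝ) (x : Fin m → Fin dx → ℝ)
    (P : Matrix (Fin dz) (Fin dx) ℝ) (Vh V : Fin m → Matrix (Fin dz) (Fin dz) ℝ) :
    Matrix (Fin dx) (Fin dx) ℝ :=
  (1 / ((m : ℝ) * δ)) •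
    ∑ i, diagonal (x i) * Pᵀ * (Vh i)⁻¹ * V i * (Vh i)⁻¹ * P * diagonal (x i)

/-- The IPO linear term `d = (1/(mδ)) Σᵢ diag(x⁽ⁱ⁾) Pᵀ (V̂⁽ⁱ⁾)⁻¹ y⁽ⁱ⁾`. -/
noncomputable def ipoD {m dx dz : ℕ} (δ : ℝ) (x : Fin m → Fin dx → ℝ)
    (P : Matrix (Fin dz) (Fin dx) ℝ) (Vh : Fin m → Matrix (Fin dz) (Fin dz) ℝ)
    (y : Fin m → Fin dz → ℝ) : Fin dx → ℝ :=
  (1 / ((m : ℝ) * δ)) • ∑ i, (diagonal (x i) * Pᵀ * (Vh i)⁻¹) *ᵥ y i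

/-- The unconstrained IPO portfolio `z*(θ, i) = (1/δ) (V̂⁽ⁱ⁾)⁻¹ P diag(x⁽ⁱ⁾) θ`. -/
noncomputable def ipoZ {m dx dz : ℕ} (δ : ℝ) (x : Fin m → Fin dx → ℝ)
    (P : Matrix (Fin dz) (Fin dx) ℝ) (Vh : Fin m → Matrix (Fin dz) (Fin dz) ℝ)
    (i : Fin m) (θ : Fin dx → ℝ) : Fin dz → ℝ :=
  (1 / δ) • (((Vh i)⁻¹ * P * diagonal (x i)) *ᵥ θ)

/-- The IPO objective
`L(θ) = (1/m) Σᵢ [ -z*(θ,i)ᵀ y⁽ⁱ⁾ + (δ/2) z*(θ,i)ᵀ V⁽ⁱ⁾ z*(θ,i) ]`. -/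
noncomputable def ipoL {m dx dz : ℕ} (δ : ℝ) (x : Fin m → Fin dx → ℝ)
    (P : Matrix (Fin dz) (Fin dx) ℝ) (Vh V : Fin m → Matrix (Fin dz) (Fin dz) ℝ)
    (y : Fin m → Fin dz → ℝ) (θ : Fin dx → ℝ) : ℝ :=
  (1 / (m : ℝ)) * ∑ i, (-(ipoZ δ x P Vh i θ ⬝ᵥ y i)
      + (δ / 2) * (ipoZ δ x P Vh i θ ⬝ᵥ (V i *ᵥ ipoZ δ x P Vh i θ)))

/-- The ex-post optimal portfolio `z_ep(i) = (1/δ) (V⁽ⁱ⁾)⁻¹ y⁽ⁱ⁾`. -/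
noncomputable def ipoZep {m dz : ℕ} (δ : ℝ) (V : Fin m → Matrix (Fin dz) (Fin dz) ℝ)
    (y : Fin m → Fin dz → ℝ) (i : Fin m) : Fin dz → ℝ :=
  (1 / δ) • ((V i)⁻¹ *ᵥ y i)

/-- The average tracking error
`L_te(θ) = (1/(2m)) Σᵢ (z*(θ,i) − z_ep(i))ᵀ V⁽ⁱ⁾ (z*(θ,i) − z_ep(i))`. -/
noncomputable def ipoLte {m dx dz : ℕ} (δ : ℝ) (x : Fin m → Fin dx → ℝ)
    (P : Matrix (Fin dz) (Fin dx) ℝ) (Vh V : Fin m → Matrix (Fin dz) (Fin dz) ℝ)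
    (y : Fin m → Fin dz → ℝ) (θ : Fin dx → ℝ) : ℝ :=
  (1 / (2 * (m : ℝ))) * ∑ i,
    ((ipoZ δ x P Vh i θ - ipoZep δ V y i) ⬝ᵥ
      (V i *ᵥ (ipoZ δ x P Vh i θ - ipoZep δ V y i)))

/- ---------------- auxiliary lemmas ---------------- -/

section Aux

variable {m dx dz : ℕ}

lemma my_sum_mulVec {n k p : ℕ} (M : Fin k → Matrix (Fin n) (Fin p) ℝ) (v : Fin p → ℝ) :
    (∑ i, M i) *ᵥ v = ∑ i, M i *ᵥ v := by
  ext j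
  simp only [mulVec, dotProduct, Finset.sum_apply, Matrix.sum_apply, Finset.sum_mul]
  rw [Finset.sum_comm]

lemma my_dot_sum {n k : ℕ} (u : Fin n → ℝ) (v : Fin k → Fin n → ℝ) :
    u ⬝ᵥ (∑ i, v i) = ∑ i, u ⬝ᵥ v i := by
  simp only [dotProduct, Finset.sum_apply, Finset.mul_sum]
  rw [Finset.sum_comm]

lemma my_dot_tmul {n p : ℕ} (B : Matrix (Fin n) (Fin p) ℝ) (u : Fin p → ℝ) (w : Fin n → ℝ) :
    u ⬝ᵥ (Bᵀ *ᵥ w) = (B *ᵥ u) ⬝ᵥ w := by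
  rw [dotProduct_mulVec, vecMul_transpose]

lemma posdef_symm {n : ℕ} {M : Matrix (Fin n) (Fin n) ℝ} (h : M.PosDef) : Mᵀ = M := by
  have := h.isHermitian.eq; simpa using this

lemma posdef_inv_symm {n : ℕ} {M : Matrix (Fin n) (Fin n) ℝ} (h : M.PosDef) :
    (M⁻¹)ᵀ = M⁻¹ := by
  rw [transpose_nonsing_inv]; congr 1; exact posdef_symm h

lemma posdef_mul_inv {n : ℕ} {M : Matrix (Fin n) (Fin n) ℝ} (h : M.PosDef) : M * M⁻¹ = 1 :=
  mul_nonsing_inv M (isUnit_iff_ne_zero.mpr h.det_pos.ne')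

/-- `B i = (V̂⁽ⁱ⁾)⁻¹ P diag(x⁽ⁱ⁾)`. -/
noncomputable def ipoB (x : Fin m → Fin dx → ℝ) (P : Matrix (Fin dz) (Fin dx) ℝ)
    (Vh : Fin m → Matrix (Fin dz) (Fin dz) ℝ) (i : Fin m) : Matrix (Fin dz) (Fin dx) ℝ :=
  (Vh i)⁻¹ * P * diagonal (x i)

lemma ipoB_transpose (x : Fin m → Fin dx → ℝ) (P : Matrix (Fin dz) (Fin dx) ℝ)
    (Vh : Fin m → Matrix (Fin dz) (Fin dz) ℝ) (hVh : ∀ i, (Vh i).PosDef) (i : Fin m) :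
    (ipoB x P Vh i)ᵀ = diagonal (x i) * Pᵀ * (Vh i)⁻¹ := by
  simp [ipoB, transpose_mul, diagonal_transpose, posdef_inv_symm (hVh i), Matrix.mul_assoc]

lemma ipoH_eq (δ : ℝ) (x : Fin m → Fin dx → ℝ) (P : Matrix (Fin dz) (Fin dx) ℝ)
    (Vh V : Fin m → Matrix (Fin dz) (Fin dz) ℝ) (hVh : ∀ i, (Vh i).PosDef) :
    ipoH δ x P Vh V =
      (1 / ((m : ℝ) * δ)) • ∑ i, (ipoB x P Vh i)ᵀ * V i * ipoB x P Vh i := by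
  unfold ipoH
  congr 1
  refine Finset.sum_congr rfl fun i _ => ?_
  rw [ipoB_transpose x P Vh hVh i]
  simp [ipoB, Matrix.mul_assoc]

lemma ipoD_eq (δ : ℝ) (x : Fin m → Fin dx → ℝ) (P : Matrix (Fin dz) (Fin dx) ℝ)
    (Vh : Fin m → Matrix (Fin dz) (Fin dz) ℝ) (hVh : ∀ i, (Vh i).PosDef)
    (y : Fin m → Fin dz → ℝ) :
    ipoD δ x P Vh y = (1 / ((m : ℝ) * δ)) • ∑ i, (ipoB x P Vh i)ᵀ *ᵥ y i := by
  unfold ipoD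
  congr 1
  refine Finset.sum_congr rfl fun i _ => ?_
  rw [ipoB_transpose x P Vh hVh i]

lemma ipoLte_formula (hm : 0 < m) {δ : ℝ} (hδ : 0 < δ)
    (x : Fin m → Fin dx → ℝ) (y : Fin m → Fin dz → ℝ)
    (P : Matrix (Fin dz) (Fin dx) ℝ)
    (Vh V : Fin m → Matrix (Fin dz) (Fin dz) ℝ)
    (hVh : ∀ i, (Vh i).PosDef) (hV : ∀ i, (V i).PosDef) (θ : Fin dx → ℝ) :
    ipoLte δ x P Vh V y θ =
      (1 / (2 * δ)) * (θ ⬝ᵥ (ipoH δ x P Vh V *ᵥ θ))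
        - (1 / δ) * (θ ⬝ᵥ ipoD δ x P Vh y)
        + (1 / (2 * (m : ℝ) * δ ^ 2)) * ∑ i, ((V i)⁻¹ *ᵥ y i) ⬝ᵥ y i := by
  have hm' : (m : ℝ) ≠ 0 := Nat.cast_ne_zero.mpr hm.ne'
  have hδ' : δ ≠ 0 := hδ.ne'
  rw [ipoH_eq δ x P Vh V hVh, ipoD_eq δ x P Vh hVh y]
  rw [smul_mulVec, my_sum_mulVec, dotProduct_smul, my_dot_sum,
      dotProduct_smul, my_dot_sum]
  unfold ipoLte
  have key : ∀ i : Fin m,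
      (ipoZ δ x P Vh i θ - ipoZep δ V y i) ⬝ᵥ
          (V i *ᵥ (ipoZ δ x P Vh i θ - ipoZep δ V y i)) =
        (1 / δ ^ 2) * (θ ⬝ᵥ (((ipoB x P Vh i)ᵀ * V i * ipoB x P Vh i) *ᵥ θ))
          - (2 / δ ^ 2) * (θ ⬝ᵥ ((ipoB x P Vh i)ᵀ *ᵥ y i))
          + (1 / δ ^ 2) * (((V i)⁻¹ *ᵥ y i) ⬝ᵥ y i) := by
    intro i
    have hVs : (V i)ᵀ = V i := posdef_symm (hV i)
    have hVy : V i *ᵥ ((V i)⁻¹ *ᵥ y i) = y i := by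
      rw [mulVec_mulVec, posdef_mul_inv (hV i), one_mulVec]
    have h1 : θ ⬝ᵥ (((ipoB x P Vh i)ᵀ * V i * ipoB x P Vh i) *ᵥ θ) =
        (ipoB x P Vh i *ᵥ θ) ⬝ᵥ (V i *ᵥ (ipoB x P Vh i *ᵥ θ)) := by
      rw [Matrix.mul_assoc, ← mulVec_mulVec, my_dot_tmul, mulVec_mulVec]
    have h2 : θ ⬝ᵥ ((ipoB x P Vh i)ᵀ *ᵥ y i) = (ipoB x P Vh i *ᵥ θ) ⬝ᵥ y i :=
      my_dot_tmul _ _ _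
    have h3 : ((V i)⁻¹ *ᵥ y i) ⬝ᵥ (V i *ᵥ (ipoB x P Vh i *ᵥ θ)) =
        (ipoB x P Vh i *ᵥ θ) ⬝ᵥ y i := by
      rw [dotProduct_mulVec, ← mulVec_transpose, hVs, hVy, dotProduct_comm]
    have hz : ipoZ δ x P Vh i θ = (1 / δ) • (ipoB x P Vh i *ᵥ θ) := rfl
    have hzep : ipoZep δ V y i = (1 / δ) • ((V i)⁻¹ *ᵥ y i) := rfl
    rw [hz, hzep, h1, h2]
    simp only [mulVec_sub, mulVec_smul, dotProduct_sub, sub_dotProduct,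
      smul_dotProduct, dotProduct_smul, smul_eq_mul, hVy, h3]
    field_simp
    ring
  rw [Finset.sum_congr rfl fun i _ => key i]
  rw [Finset.sum_add_distrib, Finset.sum_sub_distrib, ← Finset.mul_sum, ← Finset.mul_sum,
    ← Finset.mul_sum]
  field_simp
  have e : ∀ a : ℝ, a * ↑m * δ * (↑m)⁻¹ * δ⁻¹ = a := fun a => by field_simp
  ring_nf
  simp only [e]

lemma ipoB_mulVec_ne_zero (x : Fin m → Fin dx → ℝ) (P : Matrix (Fin dz) (Fin dx) ℝ)
    (hP : ∀ v : Fin dx → ℝ, P *ᵥ v = 0 → v = 0)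
    (Vh : Fin m → Matrix (Fin dz) (Fin dz) ℝ) (hVh : ∀ i, (Vh i).PosDef)
    {i : Fin m} (hxi : ∀ j, x i j ≠ 0) {v : Fin dx → ℝ} (hv : v ≠ 0) :
    ipoB x P Vh i *ᵥ v ≠ 0 := by
  intro h0
  apply hv
  have h1 : (Vh i) *ᵥ ((Vh i)⁻¹ *ᵥ (P *ᵥ (diagonal (x i) *ᵥ v))) = 0 := by
    have : (Vh i)⁻¹ *ᵥ (P *ᵥ (diagonal (x i) *ᵥ v)) = 0 := by
      simpa [ipoB, Matrix.mul_assoc, ← mulVec_mulVec] using h0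
    rw [this, mulVec_zero]
  rw [mulVec_mulVec, Matrix.mul_nonsing_inv _
      (isUnit_iff_ne_zero.mpr (hVh i).det_pos.ne'), one_mulVec] at h1
  have h2 : diagonal (x i) *ᵥ v = 0 := hP _ h1
  funext j
  have := congrFun h2 j
  rw [mulVec_diagonal] at this
  exact (mul_eq_zero.mp this).resolve_left (hxi j)

lemma ipoH_posDef (hm : 0 < m) {δ : ℝ} (hδ : 0 < δ)
    (x : Fin m → Fin dx → ℝ)
    (P : Matrix (Fin dz) (Fin dx) ℝ) (hP : ∀ v : Fin dx → ℝ, P *ᵥ v = 0 → v = 0)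
    (Vh V : Fin m → Matrix (Fin dz) (Fin dz) ℝ)
    (hVh : ∀ i, (Vh i).PosDef) (hV : ∀ i, (V i).PosDef)
    (hx : ∃ i, ∀ j, x i j ≠ 0) :
    (ipoH δ x P Vh V).PosDef := by
  have hm' : (0 : ℝ) < (m : ℝ) := Nat.cast_pos.mpr hm
  have hc : (0 : ℝ) < 1 / ((m : ℝ) * δ) := by positivity
  rw [posDef_iff_dotProduct_mulVec]
  constructor
  · -- Hermitian
    have ht : (ipoH δ x P Vh V)ᵀ = ipoH δ x P Vh V := by
      rw [ipoH_eq δ x P Vh V hVh]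
      rw [transpose_smul, transpose_sum]
      congr 1
      refine Finset.sum_congr rfl fun i _ => ?_
      simp [transpose_mul, posdef_symm (hV i), Matrix.mul_assoc]
    simpa [Matrix.IsHermitian] using ht
  · intro v hv
    have hstar : star v = v := by
      funext j; simp
    rw [hstar, ipoH_eq δ x P Vh V hVh, smul_mulVec, my_sum_mulVec, dotProduct_smul,
      my_dot_sum, smul_eq_mul]
    refine mul_pos hc ?_
    have hterm : ∀ i : Fin m,
        v ⬝ᵥ (((ipoB x P Vh i)ᵀ * V i * ipoB x P Vh i) *ᵥ v) =
          (ipoB x P Vh i *ᵥ v) ⬝ᵥ (V i *ᵥ (ipoB x P Vh i *ᵥ v)) := by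
      intro i
      rw [Matrix.mul_assoc, ← mulVec_mulVec, my_dot_tmul, mulVec_mulVec]
    refine Finset.sum_pos' (fun i _ => ?_) ?_
    · rw [hterm i]
      have := (hV i).posSemidef.dotProduct_mulVec_nonneg (ipoB x P Vh i *ᵥ v)
      simpa using this
    · obtain ⟨i0, hxi0⟩ := hx
      refine ⟨i0, Finset.mem_univ _, ?_⟩
      rw [hterm i0]
      have hBv : ipoB x P Vh i0 *ᵥ v ≠ 0 :=
        ipoB_mulVec_ne_zero x P hP Vh hVh hxi0 hv
      have := (hV i0).dotProduct_mulVec_pos hBv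
      simpa using this

end Aux

/-- `θ* = H⁻¹ d` is the unique global minimizer of the average tracking error to the
ex-post optimal mean-variance portfolios. -/
theorem stmt_10 {m dx dz : ℕ} (hm : 0 < m) (δ : ℝ) (hδ : 0 < δ)
    (x : Fin m → Fin dx → ℝ) (y : Fin m → Fin dz → ℝ)
    (P : Matrix (Fin dz) (Fin dx) ℝ) (hP : ∀ v : Fin dx → ℝ, P *ᵥ v = 0 → v = 0)
    (Vh V : Fin m → Matrix (Fin dz) (Fin dz) ℝ)
    (hVh : ∀ i, (Vh i).PosDef) (hV : ∀ i, (V i).PosDef)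
    (hx : ∃ i, ∀ j, x i j ≠ 0) :
    ∀ θ : Fin dx → ℝ,
      ipoLte δ x P Vh V y ((ipoH δ x P Vh V)⁻¹ *ᵥ ipoD δ x P Vh y) ≤
        ipoLte δ x P Vh V y θ ∧
      (ipoLte δ x P Vh V y θ =
          ipoLte δ x P Vh V y ((ipoH δ x P Vh V)⁻¹ *ᵥ ipoD δ x P Vh y) →
        θ = (ipoH δ x P Vh V)⁻¹ *ᵥ ipoD δ x P Vh y) := by
  intro θ
  set H := ipoH δ x P Vh V with hHdef
  set d := ipoD δ x P Vh y with hddef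
  set θs := H⁻¹ *ᵥ d with hθs
  have hH : H.PosDef := ipoH_posDef hm hδ x P hP Vh V hVh hV hx
  have hHt : Hᵀ = H := posdef_symm hH
  have hHθs : H *ᵥ θs = d := by
    rw [hθs, mulVec_mulVec, posdef_mul_inv hH, one_mulVec]
  have hsym : ∀ u w : Fin dx → ℝ, u ⬝ᵥ (H *ᵥ w) = w ⬝ᵥ (H *ᵥ u) := by
    intro u w
    rw [dotProduct_mulVec, ← mulVec_transpose, hHt, dotProduct_comm]
  have hdiff : ipoLte δ x P Vh V y θ - ipoLte δ x P Vh V y θs =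
      (1 / (2 * δ)) * ((θ - θs) ⬝ᵥ (H *ᵥ (θ - θs))) := by
    rw [ipoLte_formula hm hδ x y P Vh V hVh hV θ,
        ipoLte_formula hm hδ x y P Vh V hVh hV θs]
    rw [← hHdef, ← hddef, ← hHθs]
    simp only [mulVec_sub, dotProduct_sub, sub_dotProduct]
    rw [hsym θs θ]
    ring
  have hquad_nonneg : 0 ≤ (θ - θs) ⬝ᵥ (H *ᵥ (θ - θs)) := by
    have := hH.posSemidef.dotProduct_mulVec_nonneg (θ - θs)
    simpa using this
  constructor
  · have : 0 ≤ (1 / (2 * δ)) * ((θ - θs) ⬝ᵥ (H *ᵥ (θ - θs))) := by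
      apply mul_nonneg (by positivity) hquad_nonneg
    linarith [hdiff]
  · intro heq
    have hz : (1 / (2 * δ)) * ((θ - θs) ⬝ᵥ (H *ᵥ (θ - θs))) = 0 := by
      rw [← hdiff, heq]; ring
    have hq0 : (θ - θs) ⬝ᵥ (H *ᵥ (θ - θs)) = 0 := by
      have h2δ : (1 / (2 * δ)) ≠ 0 := by positivity
      exact (mul_eq_zero.mp hz).resolve_left h2δ
    by_contra hne
    have hsub : θ - θs ≠ 0 := sub_ne_zero.mpr hne
    have := hH.dotProduct_mulVec_pos hsub
    rw [show star (θ - θs) = θ - θs by funext j; simp] at this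
    linarith [hq0 ▸ this]
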